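/- The set {α₁−α₂, α₂−α₃, 3(α₃−α₄), 4(α₄−α₅), …, (l−2)(α_{l−2}−α_{l−1}), γ_{l−1}, γ_l} is a Z-basis of the lattice D = E + Zγ₃ + ⋯ + Zγ_l. -/

import Mathlib

/-- The standard basis vector `α_i` (0-indexed) of `L = ℤ^l`. -/
def al (l : ℕ) (i : ℕ) : Fin l → ℤ := fun j => if (j : ℕ) = i then 1 else 0

/-- `γ_r = α₁ + ⋯ + α_r - r·α_{r+1}` for `r ≤ l-1`, and `γ_l = α₁ + ⋯ + α_l`. -/
def ga (l r : ℕ) : Fin l → ℤ :=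
  fun j => if (j : ℕ) < r then 1 else if (j : ℕ) = r then -(r : ℤ) else 0

/-- `D = E + ℤγ₃ + ⋯ + ℤγ_l` where `E = ℤ(α₁-α₂) + ℤ(α₂-α₃)`. -/
def D (l : ℕ) : Submodule ℤ (Fin l → ℤ) :=
  Submodule.span ℤ ({al l 0 - al l 1, al l 1 - al l 2} ∪
    {x | ∃ r : ℕ, 3 ≤ r ∧ r ≤ l ∧ x = ga l r})

/-- The family `α₁-α₂, α₂-α₃, 3(α₃-α₄), …, (l-2)(α_{l-2}-α_{l-1}), γ_{l-1}, γ_l`,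
indexed by `Fin l` (with the entry of index `i`, `2 ≤ i ≤ l-3`, equal to
`(i+1)(α_{i+1} - α_{i+2}) = (i+1) • (al l i - al l (i+1))` in 1-indexed notation). -/
def bvec (l : ℕ) (i : Fin l) : Fin l → ℤ :=
  if (i : ℕ) = 0 then al l 0 - al l 1
  else if (i : ℕ) = 1 then al l 1 - al l 2
  else if (i : ℕ) ≤ l - 3 then ((i : ℕ) + 1 : ℤ) • (al l i - al l ((i : ℕ) + 1))
  else if (i : ℕ) = l - 2 then ga l (l - 1)
  else ga l l

/-! ### Auxiliary material -/

/-- Piecewise coefficient: `1, 1, 3, 4, 5, …`. -/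
def cc (n : ℕ) : ℤ := if n ≤ 1 then 1 else (n:ℤ)+1

lemma cc_ne_zero (n : ℕ) : cc n ≠ 0 := by
  unfold cc; split_ifs <;> [exact one_ne_zero; positivity]

/-- ℕ-indexed coordinate formula for `bvec`. -/
def bvN (m i j : ℕ) : ℤ :=
  (if i ≤ m+1 then cc i * ((if j = i then 1 else 0) - (if j = i+1 then 1 else 0)) else 0)
  + (if i = m+2 then (if j < m+3 then 1 else -((m:ℤ)+3)) else 0)
  + (if i = m+3 then 1 else 0)

lemma bvec_apply (m : ℕ) (i j : Fin (m+4)) :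
    bvec (m+4) i j = bvN m (i:ℕ) (j:ℕ) := by
  have hj := j.isLt
  have hi := i.isLt
  unfold bvN
  rcases (by omega : (i:ℕ) = 0 ∨ (i:ℕ) = 1 ∨ (2 ≤ (i:ℕ) ∧ (i:ℕ) ≤ m+1) ∨ (i:ℕ) = m+2
      ∨ (i:ℕ) = m+3) with h | h | ⟨h2, h3⟩ | h | h
  · simp only [bvec, al, cc, h, Pi.sub_apply, mul_sub, mul_ite, mul_one, mul_zero,
      if_true, eq_self_iff_true]
    split_ifs <;> first | exact ‹False›.elim | omega
  · simp only [bvec, al, cc, h, Pi.sub_apply, mul_sub, mul_ite, mul_one, mul_zero,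
      if_true, eq_self_iff_true, one_ne_zero, if_false]
    split_ifs <;> first | exact ‹False›.elim | omega
  · rw [bvec, if_neg (by omega), if_neg (by omega), if_pos (by omega : (i:ℕ) ≤ m+4-3)]
    simp only [al, cc, Pi.sub_apply, Pi.smul_apply, smul_eq_mul, mul_sub, mul_ite,
      mul_one, mul_zero]
    split_ifs <;> first | exact ‹False›.elim | omega
  · rw [bvec, if_neg (by omega), if_neg (by omega), if_neg (by omega),
      if_pos (by omega : (i:ℕ) = m+4-2), show m+4-1 = m+3 from rfl]
    simp only [ga, cc, mul_sub, mul_ite, mul_one, mul_zero]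
    split_ifs <;> first | exact ‹False›.elim | (push_cast; try omega)
  · rw [bvec, if_neg (by omega), if_neg (by omega), if_neg (by omega),
      if_neg (by omega : ¬(i:ℕ) = m+4-2)]
    simp only [ga, cc, mul_sub, mul_ite, mul_one, mul_zero]
    split_ifs <;> first | exact ‹False›.elim | (push_cast; try omega)

lemma sum_shift (f : ℕ → ℤ) (n j : ℕ) :
    ∑ i ∈ Finset.range n, (if j = i + 1 then f i else 0)
      = if 1 ≤ j ∧ j ≤ n then f (j-1) else 0 := by
  induction n with
  | zero => simp; omega
  | succ n ih =>
    rw [Finset.sum_range_succ, ih]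
    rcases (by omega : (1 ≤ j ∧ j ≤ n) ∨ j = n+1 ∨ (¬(1 ≤ j ∧ j ≤ n+1) ∧ ¬ j = n+1))
      with h | h | ⟨h1, h2⟩
    · rw [if_pos h, if_neg (by omega), if_pos (by omega), add_zero]
    · rw [if_neg (by omega), if_pos h, if_pos (by omega), zero_add, h]
      norm_num
    · rw [if_neg (by omega), if_neg (by omega), if_neg h1, add_zero]

lemma sum_diag (f : ℕ → ℤ) (n j : ℕ) :
    ∑ i ∈ Finset.range n, (if j = i then f i else 0)
      = if j < n then f j else 0 := by
  rw [Finset.sum_ite_eq]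
  simp [Finset.mem_range]

lemma sum_bvN (m : ℕ) (G : ℕ → ℤ) (j : ℕ) :
    ∑ n ∈ Finset.range (m+4), G n * bvN m n j
      = (if j < m+2 then G j * cc j else 0)
        - (if 1 ≤ j ∧ j ≤ m+2 then G (j-1) * cc (j-1) else 0)
        + G (m+2) * (if j < m+3 then 1 else -((m:ℤ)+3))
        + G (m+3) := by
  rw [show m+4 = (m+2)+1+1 from rfl, Finset.sum_range_succ, Finset.sum_range_succ]
  have h1 : bvN m (m+2) j = (if j < m+3 then 1 else -((m:ℤ)+3)) := by
    simp only [bvN, if_neg (show ¬(m+2 ≤ m+1) by omega), if_neg (show ¬(m+2 = m+3) by omega),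
      if_pos (show m+2 = m+2 from rfl), if_true]
    ring
  have h2 : bvN m (m+3) j = 1 := by
    simp only [bvN, if_neg (show ¬(m+3 ≤ m+1) by omega), if_neg (show ¬(m+3 = m+2) by omega),
      if_pos (show m+3 = m+3 from rfl), if_true]
    ring
  rw [h1, h2, mul_one]
  congr 1
  have h3 : ∀ n ∈ Finset.range (m+2), G n * bvN m n j
      = (if j = n then G n * cc n else 0) - (if j = n+1 then G n * cc n else 0) := by
    intro n hn
    rw [Finset.mem_range] at hn
    simp only [bvN, if_pos (show n ≤ m+1 by omega), if_neg (show ¬(n = m+2) by omega),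
      if_neg (show ¬(n = m+3) by omega)]
    split_ifs <;> first | exact ‹False›.elim | ring | (ring_nf; omega)
  rw [Finset.sum_congr rfl h3, Finset.sum_sub_distrib, sum_diag, sum_shift]

/-- The telescoping identity `γ_{r+1} = γ_r + (r+1)(α_r - α_{r+1})` (0-indexed). -/
lemma ga_succ (l r : ℕ) :
    ga l (r+1) = ga l r + ((r:ℤ)+1) • (al l r - al l (r+1)) := by
  funext j
  simp only [ga, al, Pi.add_apply, Pi.smul_apply, Pi.sub_apply, smul_eq_mul]
  split_ifs <;> push_cast <;> ring_nf <;> omega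

/-- `γ₃ = 3(α₂-α₃) + (α₀-α₁) + 2(α₁-α₂)` (0-indexed). -/
lemma ga_three (l : ℕ) :
    ga l 3 = (3:ℤ) • (al l 2 - al l 3) + (al l 0 - al l 1) + (2:ℤ) • (al l 1 - al l 2) := by
  funext j
  simp only [ga, al, Pi.add_apply, Pi.smul_apply, Pi.sub_apply, smul_eq_mul]
  split_ifs <;> push_cast <;> (try ring_nf) <;> omega

/-- The set `{α₁-α₂, α₂-α₃, 3(α₃-α₄), …, (l-2)(α_{l-2}-α_{l-1}), γ_{l-1}, γ_l}`
is a `ℤ`-basis of the lattice `D`. -/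
theorem stmt8 (l : ℕ) (hl : 4 ≤ l) :
    LinearIndependent ℤ (bvec l) ∧
    Submodule.span ℤ (Set.range (bvec l)) = D l := by
  obtain ⟨m, rfl⟩ : ∃ m, l = m + 4 := ⟨l - 4, by omega⟩
  constructor
  · -- Linear independence
    rw [Fintype.linearIndependent_iff]
    intro g hg
    set G : ℕ → ℤ := fun n => if h : n < m+4 then g ⟨n, h⟩ else 0 with hGdef
    have hGg : ∀ i : Fin (m+4), G (i:ℕ) = g i := by
      intro i
      simp only [hGdef, dif_pos i.isLt, Fin.eta]
    have key : ∀ j : ℕ, j < m+4 →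
        (if j < m+2 then G j * cc j else 0)
        - (if 1 ≤ j ∧ j ≤ m+2 then G (j-1) * cc (j-1) else 0)
        + G (m+2) * (if j < m+3 then 1 else -((m:ℤ)+3))
        + G (m+3) = 0 := by
      intro j hj
      rw [← sum_bvN]
      have h0 := congrFun hg ⟨j, hj⟩
      rw [Finset.sum_apply, Pi.zero_apply] at h0
      rw [← h0]
      rw [← Fin.sum_univ_eq_sum_range (fun n => G n * bvN m n j) (m+4)]
      exact Finset.sum_congr rfl fun i _ => by
        rw [Pi.smul_apply, smul_eq_mul, bvec_apply, hGg]
    set A : ℤ := G (m+2) + G (m+3) with hA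
    have claim : ∀ j : ℕ, j ≤ m+1 → G j * cc j = -((j:ℤ)+1) * A := by
      intro j
      induction j with
      | zero =>
        intro _
        have h0 := key 0 (by omega)
        rw [if_pos (by omega), if_neg (by omega), if_pos (by omega)] at h0
        push_cast
        linarith
      | succ k ih =>
        intro hk
        have h0 := key (k+1) (by omega)
        rw [if_pos (by omega), if_pos (by omega), if_pos (by omega),
          Nat.add_sub_cancel] at h0
        have h1 := ih (by omega)
        push_cast at h1 ⊢
        linarith
    have hA0 : A = 0 := by
      have h0 := key (m+2) (by omega)
      rw [if_neg (by omega), if_pos (by omega), if_pos (by omega),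
        show m+2-1 = m+1 from rfl] at h0
      have h1 := claim (m+1) (le_refl _)
      have h2 : ((m:ℤ)+3) * A = 0 := by
        push_cast at h1
        linarith
      rcases mul_eq_zero.mp h2 with h | h
      · exfalso; omega
      · exact h
    have hGzero : ∀ j : ℕ, j ≤ m+1 → G j = 0 := by
      intro j hj
      have h1 := claim j hj
      rw [hA0, mul_zero] at h1
      exact (mul_eq_zero.mp h1).resolve_right (cc_ne_zero j)
    have hGm2 : G (m+2) = 0 := by
      have h0 := key (m+3) (by omega)
      rw [if_neg (by omega), if_neg (by omega), if_neg (by omega)] at h0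
      have h2 : ((m:ℤ)+4) * G (m+2) = 0 := by linarith [hA0]
      rcases mul_eq_zero.mp h2 with h | h
      · exfalso; omega
      · exact h
    have hGm3 : G (m+3) = 0 := by
      have := hA0
      rw [hA, hGm2] at this
      linarith
    intro i
    rw [← hGg i]
    have hi := i.isLt
    rcases (by omega : (i:ℕ) ≤ m+1 ∨ (i:ℕ) = m+2 ∨ (i:ℕ) = m+3) with h | h | h
    · exact hGzero _ h
    · rw [h]; exact hGm2
    · rw [h]; exact hGm3
  · -- Span equality
    apply le_antisymm
    · rw [Submodule.span_le]
      rintro x ⟨i, rfl⟩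
      have hi := i.isLt
      have gen1 : al (m+4) 0 - al (m+4) 1 ∈ D (m+4) :=
        Submodule.subset_span (Or.inl (Set.mem_insert _ _))
      have gen2 : al (m+4) 1 - al (m+4) 2 ∈ D (m+4) :=
        Submodule.subset_span (Or.inl (Set.mem_insert_of_mem _ rfl))
      have genga : ∀ r : ℕ, 3 ≤ r → r ≤ m+4 → ga (m+4) r ∈ D (m+4) := by
        intro r h3 h4
        exact Submodule.subset_span (Or.inr ⟨r, h3, h4, rfl⟩)
      rcases (by omega : (i:ℕ) = 0 ∨ (i:ℕ) = 1 ∨ (i:ℕ) = 2 ∨ (3 ≤ (i:ℕ) ∧ (i:ℕ) ≤ m+1)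
          ∨ (i:ℕ) = m+2 ∨ (i:ℕ) = m+3) with h | h | h | ⟨h2, h3⟩ | h | h
      · rw [bvec, if_pos h]; exact gen1
      · rw [bvec, if_neg (by omega), if_pos h]; exact gen2
      · rcases Nat.eq_zero_or_pos m with hm | hm
        · -- m = 0 : bvec 2 = γ₃ itself
          subst hm
          rw [bvec, if_neg (by omega), if_neg (by omega), if_neg (by omega),
            if_pos (by omega : (i:ℕ) = 0+4-2)]
          exact genga 3 (by omega) (by omega)
        · rw [bvec, if_neg (by omega), if_neg (by omega),
            if_pos (by omega : (i:ℕ) ≤ m+4-3), h]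
          have h5 : (((2:ℕ):ℤ) + 1) • (al (m+4) 2 - al (m+4) (2+1))
              = ga (m+4) 3 - (al (m+4) 0 - al (m+4) 1)
                - (2:ℤ) • (al (m+4) 1 - al (m+4) 2) := by
            rw [ga_three]; push_cast; abel
          rw [h5]
          exact sub_mem (sub_mem (genga 3 (by omega) (by omega)) gen1)
            (Submodule.smul_mem _ _ gen2)
      · rw [bvec, if_neg (by omega), if_neg (by omega),
          if_pos (by omega : (i:ℕ) ≤ m+4-3)]
        have : (((i:ℕ):ℤ) + 1) • (al (m+4) (i:ℕ) - al (m+4) ((i:ℕ)+1))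
            = ga (m+4) ((i:ℕ)+1) - ga (m+4) (i:ℕ) := by
          rw [ga_succ]; abel
        rw [this]
        exact sub_mem (genga _ (by omega) (by omega)) (genga _ (by omega) (by omega))
      · rw [bvec, if_neg (by omega), if_neg (by omega), if_neg (by omega),
          if_pos (by omega : (i:ℕ) = m+4-2), show m+4-1 = m+3 from rfl]
        exact genga (m+3) (by omega) (by omega)
      · rw [bvec, if_neg (by omega), if_neg (by omega), if_neg (by omega),
          if_neg (by omega : ¬(i:ℕ) = m+4-2)]
        exact genga (m+4) (by omega) (by omega)
    · rw [D, Submodule.span_le]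
      have hb0 : al (m+4) 0 - al (m+4) 1 ∈ Submodule.span ℤ (Set.range (bvec (m+4))) := by
        have : al (m+4) 0 - al (m+4) 1 = bvec (m+4) ⟨0, by omega⟩ := by
          rw [bvec]; norm_num
        rw [this]; exact Submodule.subset_span ⟨_, rfl⟩
      have hb1 : al (m+4) 1 - al (m+4) 2 ∈ Submodule.span ℤ (Set.range (bvec (m+4))) := by
        have : al (m+4) 1 - al (m+4) 2 = bvec (m+4) ⟨1, by omega⟩ := by
          rw [bvec]; norm_num
        rw [this]; exact Submodule.subset_span ⟨_, rfl⟩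
      have hbv : ∀ i : Fin (m+4), bvec (m+4) i ∈ Submodule.span ℤ (Set.range (bvec (m+4))) :=
        fun i => Submodule.subset_span ⟨i, rfl⟩
      have hga : ∀ r : ℕ, 3 ≤ r → r ≤ m+4 →
          ga (m+4) r ∈ Submodule.span ℤ (Set.range (bvec (m+4))) := by
        have base : ga (m+4) 3 ∈ Submodule.span ℤ (Set.range (bvec (m+4))) := by
          rcases Nat.eq_zero_or_pos m with hm | hm
          · subst hm
            have : ga (0+4) 3 = bvec (0+4) ⟨2, by omega⟩ := by
              rw [bvec]; norm_num
            rw [this]; exact hbv _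
          · have h2 : bvec (m+4) ⟨2, by omega⟩
                = (((2:ℕ):ℤ) + 1) • (al (m+4) 2 - al (m+4) (2+1)) := by
              simp only [bvec, Fin.val_mk]
              rw [if_neg (by omega), if_neg (by omega),
                if_pos (by omega : 2 ≤ m+4-3)]
            have : ga (m+4) 3 = bvec (m+4) ⟨2, by omega⟩ + (al (m+4) 0 - al (m+4) 1)
                + (2:ℤ) • (al (m+4) 1 - al (m+4) 2) := by
              rw [h2, ga_three]; push_cast; abel
            rw [this]
            exact add_mem (add_mem (hbv _) hb0) (Submodule.smul_mem _ _ hb1)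
        have step : ∀ r : ℕ, 3 ≤ r → r ≤ m+4 →
            ga (m+4) r ∈ Submodule.span ℤ (Set.range (bvec (m+4))) := by
          intro r
          induction r with
          | zero => intro h3 _; exact absurd h3 (by omega)
          | succ k ih =>
            intro h3 h4
            rcases (by omega : k = 2 ∨ (3 ≤ k ∧ k+1 ≤ m+2) ∨ k+1 = m+3 ∨ k+1 = m+4)
              with h | ⟨hk3, hk2⟩ | h | h
            · subst h; exact base
            · have hk : bvec (m+4) ⟨k, by omega⟩
                  = (((k:ℕ):ℤ) + 1) • (al (m+4) k - al (m+4) (k+1)) := by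
                simp only [bvec, Fin.val_mk]
                rw [if_neg (by omega), if_neg (by omega),
                  if_pos (by omega : k ≤ m+4-3)]
              have hid : ga (m+4) (k+1) = ga (m+4) k + bvec (m+4) ⟨k, by omega⟩ := by
                rw [hk, ga_succ]
              rw [hid]
              exact add_mem (ih (by omega) (by omega)) (hbv _)
            · have : ga (m+4) (k+1) = bvec (m+4) ⟨k, by omega⟩ := by
                simp only [bvec, Fin.val_mk]
                rw [if_neg (by omega), if_neg (by omega), if_neg (by omega),
                  if_pos (by omega : k = m+4-2), show m+4-1 = m+3 from rfl, h]
              rw [this]; exact hbv _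
            · have : ga (m+4) (k+1) = bvec (m+4) ⟨k, by omega⟩ := by
                simp only [bvec, Fin.val_mk]
                rw [if_neg (by omega), if_neg (by omega), if_neg (by omega),
                  if_neg (by omega : ¬k = m+4-2), h]
              rw [this]; exact hbv _
        exact step
      rintro x (hx | ⟨r, h3, h4, rfl⟩)
      · rcases hx with rfl | rfl
        · exact hb0
        · exact hb1
      · exact hga r h3 h4
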